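/- Let p be a prime and k an even integer > 0. Then B_k - S_k(p)/p lies in Z_{(p)}. -/

import Mathlib

open Finset

private lemma padicNorm_pow' (p : ℕ) [Fact p.Prime] (x : ℚ) (e : ℕ) :
    padicNorm p (x ^ e) = padicNorm p x ^ e := by
  induction e with
  | zero => simp [padicNorm.one]
  | succ n ih => rw [pow_succ, pow_succ, padicNorm.mul, ih]

/-- If `p ∤ u` then `‖p^e / u‖_p ≤ 1`. -/
private lemma norm_p_pow_div_nat {p : ℕ} (hp : p.Prime) {u : ℕ} (hu : ¬ p ∣ u) (e : ℕ) :
    padicNorm p ((p : ℚ) ^ e / u) ≤ 1 := by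
  haveI : Fact p.Prime := ⟨hp⟩
  rw [padicNorm.div, padicNorm_pow', padicNorm.padicNorm_p hp.one_lt,
    (padicNorm.nat_eq_one_iff u).mpr hu, div_one]
  have h1 : ((p : ℚ))⁻¹ ≤ 1 := by
    rw [inv_le_one_iff₀]
    right
    exact_mod_cast hp.one_lt.le
  exact pow_le_one₀ (by positivity) h1

private lemma padicValNat_add_two_le {p m : ℕ} (hp : p.Prime) (hm : 3 ≤ m) :
    padicValNat p m + 2 ≤ m := by
  haveI : Fact p.Prime := ⟨hp⟩
  set v := padicValNat p m with hv
  have hm0 : m ≠ 0 := by omega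
  have hpv : p ^ v ≤ m := Nat.le_of_dvd (by omega) pow_padicValNat_dvd
  rcases le_or_gt v 1 with h | h
  · omega
  · have h2 : 2 ^ v ≤ p ^ v := Nat.pow_le_pow_left hp.two_le v
    have h3 : v ≤ 2 ^ (v - 1) := by
      have := @Nat.lt_two_pow_self (v - 1)
      omega
    have h4 : 2 * 2 ^ (v - 1) = 2 ^ v := by
      rw [← pow_succ']
      congr 1
      omega
    omega

/-- If `3 ≤ m` then `‖p^(m-2) / m‖_p ≤ 1`. -/
private lemma norm_key {p : ℕ} (hp : p.Prime) {m : ℕ} (hm : 3 ≤ m) :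
    padicNorm p ((p : ℚ) ^ (m - 2) / m) ≤ 1 := by
  haveI : Fact p.Prime := ⟨hp⟩
  set v := padicValNat p m with hv
  have hm0 : m ≠ 0 := by omega
  have hdvd : p ^ v ∣ m := pow_padicValNat_dvd
  obtain ⟨u, humul⟩ := hdvd
  have hu : ¬ p ∣ u := by
    intro hpu
    have : p ^ (v + 1) ∣ m := by
      obtain ⟨w, hw⟩ := hpu
      exact ⟨w, by rw [humul, hw]; ring⟩
    rw [padicValNat_dvd_iff_le hm0] at this
    omega
  have hvle : v + 2 ≤ m := padicValNat_add_two_le hp hm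
  have hp0 : (p : ℚ) ≠ 0 := by exact_mod_cast hp.pos.ne'
  have hrw : ((p : ℚ)) ^ (m - 2) / m = (p : ℚ) ^ (m - 2 - v) / u := by
    have h1 : m - 2 = v + (m - 2 - v) := by omega
    have h2 : (m : ℚ) = (p : ℚ) ^ v * u := by rw [humul]; push_cast; ring
    rw [h2, h1, pow_add]
    rw [mul_div_mul_left _ _ (pow_ne_zero v hp0)]
    congr 2
    omega
  rw [hrw]
  exact norm_p_pow_div_nat hp hu _

/-- The bridging lemma: if `‖x‖_p ≤ 1` then `p ∤ x.den`. -/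
private lemma den_not_dvd_of_norm_le {p : ℕ} (hp : p.Prime) {x : ℚ}
    (h : padicNorm p x ≤ 1) : ¬ p ∣ x.den := by
  haveI : Fact p.Prime := ⟨hp⟩
  intro hdvd
  rcases eq_or_ne x 0 with rfl | hx
  · rw [Rat.den_zero, Nat.dvd_one] at hdvd
    exact hp.ne_one hdvd
  · have hnum : ¬ (p : ℤ) ∣ x.num := by
      intro hpn
      have h1 : p ∣ x.num.natAbs := by
        rw [← Int.natCast_dvd_natCast]
        exact (Int.dvd_natAbs).mpr hpn
      have := Nat.Coprime.eq_one_of_dvd (Nat.Coprime.coprime_dvd_left h1 x.reduced) hdvd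
      exact hp.ne_one this
    have hvnum : padicValInt p x.num = 0 := padicValInt.eq_zero_of_not_dvd hnum
    have hvden : 1 ≤ padicValNat p x.den :=
      one_le_padicValNat_of_dvd x.den_nz hdvd
    have hval : padicValRat p x < 0 := by
      rw [padicValRat]
      omega
    rw [padicNorm.eq_zpow_of_nonzero hx] at h
    have hp1 : (1 : ℚ) < p := by exact_mod_cast hp.one_lt
    have : (1 : ℚ) < (p : ℚ) ^ (-padicValRat p x) := by
      apply one_lt_zpow₀ hp1
      omega
    linarith

private lemma bernoulli_odd_zero {n : ℕ} (hn : Odd n) (h1 : 1 < n) : bernoulli n = 0 := by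
  rw [bernoulli_eq_bernoulli'_of_ne_one (by omega)]
  exact bernoulli'_eq_zero_of_odd hn h1


/-- Bound for the auxiliary quantity `C(k+1,i) * p^(k-i-1) / (k+1)`. -/
private lemma norm_B {p k i : ℕ} (hp : p.Prime) (hik : i + 2 ≤ k) :
    padicNorm p (((k + 1).choose i : ℚ) * (p : ℚ) ^ (k - i - 1) / ((k : ℚ) + 1)) ≤ 1 := by
  haveI : Fact p.Prime := ⟨hp⟩
  set m := k + 1 - i with hm
  have hm3 : 3 ≤ m := by omega
  have hid : (k.choose i : ℚ) * ((k : ℚ) + 1) = ((k + 1).choose i : ℚ) * (m : ℚ) := by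
    have := Nat.choose_mul_succ_eq k i
    have h2 : (k.choose i * (k + 1) : ℕ) = ((k + 1).choose i * m : ℕ) := by
      rw [this]
    exact_mod_cast h2
  have hk1 : ((k : ℚ) + 1) ≠ 0 := by positivity
  have hm0 : (m : ℚ) ≠ 0 := by
    have : 0 < m := by omega
    exact_mod_cast this.ne'
  have hrw : ((k + 1).choose i : ℚ) * (p : ℚ) ^ (k - i - 1) / ((k : ℚ) + 1)
      = (k.choose i : ℚ) * ((p : ℚ) ^ (m - 2) / (m : ℚ)) := by
    have he : k - i - 1 = m - 2 := by omega
    rw [he, ← mul_div_assoc, div_eq_div_iff hk1 hm0]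
    linear_combination (-((p : ℚ) ^ (m - 2))) * hid
  rw [hrw, padicNorm.mul]
  have h1 : padicNorm p ((k.choose i : ℚ)) ≤ 1 := padicNorm.of_nat _
  have h2 : padicNorm p ((p : ℚ) ^ (m - 2) / (m : ℚ)) ≤ 1 := norm_key hp hm3
  calc padicNorm p ((k.choose i : ℚ)) * padicNorm p ((p : ℚ) ^ (m - 2) / (m : ℚ))
      ≤ 1 * 1 := mul_le_mul h1 h2 (padicNorm.nonneg _) zero_le_one
    _ = 1 := by ring

/-- key inductive statement -/
private lemma key_induction {p : ℕ} (hp : p.Prime) :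
    ∀ k, Even k →
      padicNorm p (bernoulli k - (∑ j ∈ Finset.range p, (j : ℚ) ^ k) / (p : ℚ)) ≤ 1 := by
  haveI : Fact p.Prime := ⟨hp⟩
  have hp0 : (p : ℚ) ≠ 0 := by exact_mod_cast hp.pos.ne'
  intro k
  induction k using Nat.strong_induction_on with
  | _ k ih =>
    intro hk
    rcases Nat.eq_zero_or_pos k with rfl | hkpos
    · have : bernoulli 0 - (∑ j ∈ Finset.range p, (j : ℚ) ^ 0) / (p : ℚ) = 0 := by
        simp [bernoulli_zero, div_self hp0]
      rw [this, padicNorm.zero]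
      norm_num
    -- k ≥ 2 even
    have hk2 : 2 ≤ k := by
      rcases hk with ⟨t, rfl⟩
      omega
    have hk1 : ((k : ℚ) + 1) ≠ 0 := by positivity
    have hmain : bernoulli k - (∑ j ∈ Finset.range p, (j : ℚ) ^ k) / (p : ℚ)
        = -∑ i ∈ Finset.range k,
            bernoulli i * ((k + 1).choose i : ℚ) * (p : ℚ) ^ (k - i) / ((k : ℚ) + 1) := by
      rw [sum_range_pow p k, Finset.sum_div]
      have hcongr : ∀ i ∈ Finset.range (k + 1),
          bernoulli i * ((k + 1).choose i : ℚ) * (p : ℚ) ^ (k + 1 - i) / ((k : ℚ) + 1) / (p : ℚ)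
            = bernoulli i * ((k + 1).choose i : ℚ) * (p : ℚ) ^ (k - i) / ((k : ℚ) + 1) := by
        intro i hi
        rw [Finset.mem_range] at hi
        rw [show k + 1 - i = (k - i) + 1 by omega, pow_succ]
        field_simp
      rw [Finset.sum_congr rfl hcongr, Finset.sum_range_succ]
      have hTk : bernoulli k * ((k + 1).choose k : ℚ) * (p : ℚ) ^ (k - k) / ((k : ℚ) + 1)
          = bernoulli k := by
        rw [Nat.sub_self, pow_zero, Nat.choose_succ_self_right]
        push_cast
        field_simp
      rw [hTk]
      ring
    rw [hmain, padicNorm.neg]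
    apply padicNorm.sum_le' _ zero_le_one
    intro i hi
    rw [Finset.mem_range] at hi
    by_cases hodd : Odd i
    · rcases eq_or_ne i 1 with rfl | hi1
      · -- i = 1
        have hT1 : bernoulli 1 * ((k + 1).choose 1 : ℚ) * (p : ℚ) ^ (k - 1) / ((k : ℚ) + 1)
            = -((p : ℚ) ^ (k - 1) / ((2 : ℕ) : ℚ)) := by
          rw [bernoulli_one, Nat.choose_one_right]
          push_cast
          field_simp
        rw [hT1, padicNorm.neg]
        rcases eq_or_ne p 2 with rfl | hp2
        · have h22 : ((2 : ℕ) : ℚ) ^ (k - 1) / ((2 : ℕ) : ℚ) = ((2 : ℕ) : ℚ) ^ (k - 2) := by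
            rw [show k - 1 = (k - 2) + 1 by omega, pow_succ]
            field_simp
          rw [h22, padicNorm_pow', padicNorm.padicNorm_p hp.one_lt]
          apply pow_le_one₀ (by positivity)
          rw [inv_le_one_iff₀]
          right
          norm_num
        · have hnd : ¬ p ∣ 2 := fun h =>
            hp2 ((Nat.prime_dvd_prime_iff_eq hp Nat.prime_two).mp h)
          exact norm_p_pow_div_nat hp hnd (k - 1)
      · -- odd i > 1 : bernoulli i = 0
        have hb0 : bernoulli i = 0 := bernoulli_odd_zero hodd (by rcases hodd with ⟨t, ht⟩; omega)
        simp [hb0]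
    · -- even i
      rw [Nat.not_odd_iff_even] at hodd
      have hik : i + 2 ≤ k := by
        rcases hk with ⟨a, ha⟩
        rcases hodd with ⟨b, hb⟩
        omega
      have hIH := ih i hi hodd
      set B : ℚ := ((k + 1).choose i : ℚ) * (p : ℚ) ^ (k - i - 1) / ((k : ℚ) + 1) with hB
      set D : ℚ := bernoulli i - (∑ j ∈ Finset.range p, (j : ℚ) ^ i) / (p : ℚ) with hD
      have hNcast : (∑ j ∈ Finset.range p, (j : ℚ) ^ i)
          = ((∑ j ∈ Finset.range p, j ^ i : ℕ) : ℚ) := by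
        push_cast
        rfl
      have hsplit : bernoulli i * ((k + 1).choose i : ℚ) * (p : ℚ) ^ (k - i) / ((k : ℚ) + 1)
          = D * ((p : ℚ) * B) + ((∑ j ∈ Finset.range p, j ^ i : ℕ) : ℚ) * B := by
        rw [hD, hB, ← hNcast]
        rw [show k - i = (k - i - 1) + 1 by omega, pow_succ]
        field_simp
        rw [show k - i - 1 + 1 - 1 = k - i - 1 by omega]
        ring
      have hnormB : padicNorm p B ≤ 1 := norm_B hp hik
      have hnormpB : padicNorm p ((p : ℚ) * B) ≤ 1 := by
        rw [padicNorm.mul, padicNorm.padicNorm_p hp.one_lt]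
        have hinv : ((p : ℚ))⁻¹ ≤ 1 := by
          rw [inv_le_one_iff₀]
          right
          exact_mod_cast hp.one_lt.le
        calc ((p : ℚ))⁻¹ * padicNorm p B ≤ 1 * 1 :=
              mul_le_mul hinv hnormB (padicNorm.nonneg _) zero_le_one
          _ = 1 := by ring
      rw [hsplit]
      refine le_trans padicNorm.nonarchimedean (max_le ?_ ?_)
      · rw [padicNorm.mul]
        calc padicNorm p D * padicNorm p ((p : ℚ) * B) ≤ 1 * 1 :=
            mul_le_mul hIH hnormpB (padicNorm.nonneg _) zero_le_one
          _ = 1 := by ring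
      · rw [padicNorm.mul]
        calc padicNorm p (((∑ j ∈ Finset.range p, j ^ i : ℕ) : ℚ)) * padicNorm p B ≤ 1 * 1 :=
            mul_le_mul (padicNorm.of_nat _) hnormB (padicNorm.nonneg _) zero_le_one
          _ = 1 := by ring

/-- For a prime `p` and even `k > 0`, `B_k - S_k(p)/p` lies in `ℤ_{(p)}`
(its denominator is prime to `p`). -/
theorem bernoulli_sub_power_sum_padic_integral (p k : ℕ) (hp : p.Prime)
    (hk : Even k) (hk0 : 0 < k) :
    ¬ p ∣ (bernoulli k -
            (∑ j ∈ Finset.range p, (j : ℚ) ^ k) / (p : ℚ)).den := by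
  exact den_not_dvd_of_norm_le hp (key_induction hp k hk)
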